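/- arXiv:1502.02286 — 3 statements merged into one kernel-verified Lean document; each statement's English description precedes it below -/
import Mathlib

section
/- Let c, σ, σ₁ > 0, μ > r, and |ρ| < 1. The function f(a) = (c + (μ−r)a) / (½(σ²a² + 2ρσσ₁a + σ₁²)) is strictly increasing on the interval (a₁, a₂) and strictly decreasing outside [a₁, a₂], where a₁, a₂ = (−c ± √(c² + (μ−r)²σ₁²/σ² − 2(μ−r)ρcσ₁/σ))/(μ−r). -/
open Set

/-- monotonicity of f(a) = (c+(μ−r)a)/(½(σ²a²+2ρσσ₁a+σ₁²)). -/
theorem stmt_0 (c r μ σ σ₁ ρ : ℝ) (hc : 0 < c) (hσ : 0 < σ) (hσ₁ : 0 < σ₁)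
    (hμr : r < μ) (hρ : |ρ| < 1)
    (f : ℝ → ℝ)
    (hf : ∀ a, f a = (c + (μ - r) * a) / ((1/2) * (σ^2 * a^2 + 2*ρ*σ*σ₁*a + σ₁^2)))
    (a₁ a₂ : ℝ)
    (ha₁ : a₁ = (-c - Real.sqrt (c^2 + (μ-r)^2*σ₁^2/σ^2 - 2*(μ-r)*ρ*c*σ₁/σ)) / (μ - r))
    (ha₂ : a₂ = (-c + Real.sqrt (c^2 + (μ-r)^2*σ₁^2/σ^2 - 2*(μ-r)*ρ*c*σ₁/σ)) / (μ - r)) :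
    StrictMonoOn f (Ioo a₁ a₂) ∧ StrictAntiOn f (Iic a₁) ∧ StrictAntiOn f (Ici a₂) := by
  have hμ : 0 < μ - r := sub_pos.mpr hμr
  have hρ2 : ρ^2 < 1 := by
    have := abs_lt.mp hρ
    nlinarith
  set Δ : ℝ := c^2 + (μ-r)^2*σ₁^2/σ^2 - 2*(μ-r)*ρ*c*σ₁/σ with hΔ
  have hΔpos : 0 < Δ := by
    have hq : 0 < (μ-r)^2*σ₁^2*(1-ρ^2) :=
      mul_pos (mul_pos (pow_pos hμ 2) (pow_pos hσ₁ 2)) (by linarith)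
    have h1 : 0 < Δ * σ^2 := by
      have h2 : Δ * σ^2 = (c*σ - (μ-r)*ρ*σ₁)^2 + (μ-r)^2*σ₁^2*(1 - ρ^2) := by
        rw [hΔ]; field_simp; ring
      rw [h2]
      nlinarith [sq_nonneg (c*σ - (μ-r)*ρ*σ₁)]
    nlinarith [sq_nonneg σ]
  set s : ℝ := Real.sqrt Δ with hs
  have hspos : 0 < s := Real.sqrt_pos.mpr hΔpos
  have hs2 : s^2 = Δ := Real.sq_sqrt hΔpos.le
  have hs2' : s^2 * σ^2 = c^2*σ^2 + (μ-r)^2*σ₁^2 - 2*(μ-r)*ρ*c*σ₁*σ := by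
    rw [hs2, hΔ]; field_simp
  clear_value s
  clear_value Δ
  have ha12 : a₁ < a₂ := by
    rw [ha₁, ha₂]
    exact div_lt_div_of_pos_right (by linarith) hμ
  set D : ℝ → ℝ := fun a => (1/2) * (σ^2 * a^2 + 2*ρ*σ*σ₁*a + σ₁^2) with hD
  have hDpos : ∀ a, 0 < D a := by
    intro a
    have h1 : D a = (1/2) * ((σ*a + ρ*σ₁)^2 + (1 - ρ^2)*σ₁^2) := by simp only [hD]; ring
    have h2 : 0 < (1 - ρ^2)*σ₁^2 := mul_pos (by linarith) (pow_pos hσ₁ 2)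
    rw [h1]
    nlinarith [sq_nonneg (σ*a + ρ*σ₁)]
  set G : ℝ → ℝ := fun a => ((μ-r) * D a - (c + (μ-r)*a) * (σ^2*a + ρ*σ*σ₁)) / (D a)^2
    with hG
  have hderiv : ∀ a, HasDerivAt f (G a) a := by
    intro a
    have hN : HasDerivAt (fun x : ℝ => c + (μ-r)*x) (μ-r) a := by
      simpa using ((hasDerivAt_id a).const_mul (μ-r)).const_add c
    have hDd : HasDerivAt D (σ^2*a + ρ*σ*σ₁) a := by
      have hp : HasDerivAt (fun x : ℝ => x^2) (2*a) a := by
        simpa using hasDerivAt_pow 2 a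
      have h1 := (((hp.const_mul (σ^2)).add
        (((hasDerivAt_id a).const_mul (2*ρ*σ*σ₁)).add_const (σ₁^2))).const_mul (1/2))
      have h2 : HasDerivAt D ((1/2) * (σ^2 * (2*a) + 2*ρ*σ*σ₁*1)) a := by
        apply h1.congr_of_eventuallyEq
        filter_upwards with x
        simp only [hD, id, Pi.add_apply]
        ring
      convert h2 using 1
      ring
    have h := hN.div hDd (hDpos a).ne'
    have hfe : f = fun x => (c + (μ-r)*x) / D x := by
      funext x; rw [hf x]
    rw [hfe]
    exact h
  have key : ∀ a, (μ-r) * D a - (c + (μ-r)*a) * (σ^2*a + ρ*σ*σ₁)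
      = -(1/2) * σ^2 * (μ-r) * (a - a₁) * (a - a₂) := by
    intro a
    rw [ha₁, ha₂]
    simp only [hD]
    field_simp
    ring_nf
    linear_combination (-1 : ℝ) * hs2'
  have hpos : ∀ a ∈ Ioo a₁ a₂, 0 < G a := by
    intro a ha
    apply div_pos ?_ (pow_pos (hDpos a) 2)
    rw [key a]
    have hprod := mul_pos (mul_pos hμ (pow_pos hσ 2))
      (mul_pos (sub_pos.mpr ha.1) (sub_pos.mpr ha.2))
    linarith [hprod]
  have hneg₁ : ∀ a ∈ Iio a₁, G a < 0 := by
    intro a ha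
    apply div_neg_of_neg_of_pos ?_ (pow_pos (hDpos a) 2)
    rw [key a]
    have hprod := mul_pos (mul_pos hμ (pow_pos hσ 2))
      (mul_pos_of_neg_of_neg (sub_neg.mpr ha) (sub_neg.mpr (ha.trans ha12)))
    linarith [hprod]
  have hneg₂ : ∀ a ∈ Ioi a₂, G a < 0 := by
    intro a ha
    apply div_neg_of_neg_of_pos ?_ (pow_pos (hDpos a) 2)
    rw [key a]
    have hprod := mul_pos (mul_pos hμ (pow_pos hσ 2))
      (mul_pos (sub_pos.mpr (ha12.trans ha)) (sub_pos.mpr ha))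
    linarith [hprod]
  have hdiff : Differentiable ℝ f := fun a => (hderiv a).differentiableAt
  have hderiv' : deriv f = G := funext fun a => (hderiv a).deriv
  refine ⟨?_, ?_, ?_⟩
  · apply strictMonoOn_of_deriv_pos (convex_Ioo a₁ a₂) hdiff.continuous.continuousOn
    intro x hx
    rw [interior_Ioo] at hx
    rw [hderiv']
    exact hpos x hx
  · apply strictAntiOn_of_deriv_neg (convex_Iic a₁) hdiff.continuous.continuousOn
    intro x hx
    rw [interior_Iic] at hx
    rw [hderiv']
    exact hneg₁ x hx
  · apply strictAntiOn_of_deriv_neg (convex_Ici a₂) hdiff.continuous.continuousOn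
    intro x hx
    rw [interior_Ici] at hx
    rw [hderiv']
    exact hneg₂ x hx
end

section
/- Let c_ρ, σ_ρ > 0 and γ > 0 be constants. Suppose ṽ : (0,∞) → ℝ is continuously differentiable with ṽ(0+) = 0, ṽ′ < 0 near 0, and satisfies (c_ρ + rx)(ṽ(x)+1)ṽ′(x) + ½σ_ρ²(ṽ′(x))² − λṽ′(x)∫₀ˣ H(y)(ṽ(x−y)+1)dy = γ(ṽ(x)+1)², where H(y) → 1 as y → 0. If ṽ(x) = αx^β(1+o(1)) and ṽ′(x) = βαx^{β−1}(1+o(1)) as x → 0 for some constants β > 0 and α ≠ 0, then β = 1 and α satisfies c_ρ α + ½σ_ρ²α² = γ; since α < 0, α = −(c_ρ + √(c_ρ² + 2γσ_ρ²))/σ_ρ². -/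
open Set Filter

private lemma quad_solve (cρ σρ2 γ α : ℝ) (hcρ : 0 < cρ) (hσρ2 : 0 < σρ2) (hγ : 0 < γ)
    (hαneg : α < 0) (h : cρ * α + (1/2) * σρ2 * α^2 = γ) :
    α = -(cρ + Real.sqrt (cρ^2 + 2 * γ * σρ2)) / σρ2 := by
  set s := Real.sqrt (cρ^2 + 2 * γ * σρ2) with hs
  have hs0 : 0 ≤ s := Real.sqrt_nonneg _
  have hs2 : s^2 = cρ^2 + 2 * γ * σρ2 := Real.sq_sqrt (by positivity)
  have key : (σρ2 * α + cρ - s) * (σρ2 * α + cρ + s) = 0 := by nlinarith [h, hs2]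
  rcases mul_eq_zero.1 key with h1 | h2
  · exfalso
    have hscρ : cρ < s := by nlinarith
    nlinarith
  · field_simp
    linarith


/-- matching the power-law ansatz ṽ(x) = αx^β(1+o(1)) at 0 in the equation
for ṽ forces β = 1 and c_ρα + ½σ_ρ²α² = γ; since α < 0, α = −(c_ρ+√(c_ρ²+2γσ_ρ²))/σ_ρ². -/
theorem stmt_8 (r lam cρ σρ2 γ α β : ℝ)
    (hr : 0 ≤ r) (hlam : 0 ≤ lam) (hcρ : 0 < cρ) (hσρ2 : 0 < σρ2) (hγ : 0 < γ)
    (hβ : 0 < β) (hα : α ≠ 0)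
    (H : ℝ → ℝ) (hHcont : Continuous H) (hH1 : Tendsto H (nhdsWithin 0 (Ioi 0)) (nhds 1))
    (v : ℝ → ℝ) (hvd : ∀ x > (0:ℝ), DifferentiableAt ℝ v x)
    (hv0 : Tendsto v (nhdsWithin 0 (Ioi 0)) (nhds 0))
    (hv' : ∃ ε > (0:ℝ), ∀ x ∈ Ioo (0:ℝ) ε, deriv v x < 0)
    (heq : ∀ x > (0:ℝ),
        (cρ + r * x) * (v x + 1) * deriv v x + (1/2) * σρ2 * (deriv v x)^2
          - lam * deriv v x * ∫ y in (0:ℝ)..x, H y * (v (x - y) + 1)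
        = γ * (v x + 1)^2)
    (hasym : Tendsto (fun x => v x / (α * x ^ β)) (nhdsWithin 0 (Ioi 0)) (nhds 1))
    (hasym' : Tendsto (fun x => deriv v x / (β * α * x ^ (β - 1)))
        (nhdsWithin 0 (Ioi 0)) (nhds 1)) :
    β = 1 ∧ cρ * α + (1/2) * σρ2 * α^2 = γ ∧
    α = -(cρ + Real.sqrt (cρ^2 + 2 * γ * σρ2)) / σρ2 := by
  set F := nhdsWithin (0:ℝ) (Ioi 0) with hFdefEq
  have hxpos : ∀ᶠ x in F, (0:ℝ) < x := eventually_mem_nhdsWithin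
  obtain ⟨ε, hεpos, hvneg⟩ := hv'
  have hwneg : ∀ᶠ x in F, deriv v x < 0 := by
    filter_upwards [Ioo_mem_nhdsGT_of_mem (by exact ⟨le_refl 0, hεpos⟩ : (0:ℝ) ∈ Ico 0 ε)]
      with x hx using hvneg x hx
  -- α < 0
  have hαneg : α < 0 := by
    have h2 : ∀ᶠ x in F, 0 < deriv v x / (β * α * x ^ (β - 1)) :=
      hasym'.eventually (eventually_gt_nhds (by norm_num))
    obtain ⟨x, hx1, hx2, hx3⟩ := (hwneg.and (h2.and hxpos)).exists
    have hp : 0 < x ^ (β-1) := Real.rpow_pos_of_pos hx3 _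
    rcases div_pos_iff.mp hx2 with ⟨h, _⟩ | ⟨_, hd⟩
    · linarith
    · by_contra hge
      push_neg at hge
      nlinarith [mul_nonneg (mul_nonneg hβ.le hge) hp.le]
  -- various limits
  have hv1 : Tendsto (fun x => v x + 1) F (nhds 1) := by
    simpa using hv0.add (tendsto_const_nhds (x := (1:ℝ)))
  have hrx : Tendsto (fun x => cρ + r * x) F (nhds cρ) := by
    have : Tendsto (fun x : ℝ => cρ + r * x) (nhds 0) (nhds (cρ + r * 0)) :=
      (continuous_const.add (continuous_const.mul continuous_id)).tendsto 0
    simpa using this.mono_left nhdsWithin_le_nhds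
  have hxβ : Tendsto (fun x : ℝ => x ^ β) F (nhds 0) := by
    have := ((Real.continuousAt_rpow_const 0 β (Or.inr hβ.le)).tendsto).mono_left
      (nhdsWithin_le_nhds (s := Ioi (0:ℝ)))
    simpa [Real.zero_rpow hβ.ne'] using this
  -- deriv v x * x → 0
  have hwx0 : Tendsto (fun x => deriv v x * x) F (nhds 0) := by
    have hmul : Tendsto (fun x => (deriv v x / (β * α * x ^ (β-1))) * (β * α * x ^ β))
        F (nhds 0) := by
      have := hasym'.mul (hxβ.const_mul (β * α))
      simpa using this
    refine hmul.congr' ?_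
    filter_upwards [hxpos] with x hx
    have hp : (0:ℝ) < x ^ (β-1) := Real.rpow_pos_of_pos hx _
    have hβx : x ^ β = x ^ (β-1) * x := by
      have h1 := Real.rpow_add hx (β-1) 1
      rw [Real.rpow_one] at h1
      have h2 : β - 1 + 1 = β := by ring
      rw [h2] at h1
      exact h1
    rw [hβx]
    field_simp
  -- integral term → 0
  have hInt : Tendsto (fun x => lam * deriv v x * ∫ y in (0:ℝ)..x, H y * (v (x - y) + 1))
      F (nhds 0) := by
    have hvb : ∀ᶠ x in F, |v x| ≤ 1 := by
      have := hv0.eventually (Metric.closedBall_mem_nhds (0:ℝ) one_pos)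
      filter_upwards [this] with x hx
      simpa [Real.dist_eq] using hx
    obtain ⟨δ, hδpos, hδ⟩ := Metric.eventually_nhds_iff.mp (eventually_nhdsWithin_iff.mp hvb)
    obtain ⟨M, hM⟩ :=
      (isCompact_Icc : IsCompact (Icc (0:ℝ) δ)).exists_bound_of_continuousOn hHcont.continuousOn
    have hM0 : 0 ≤ M := le_trans (norm_nonneg _) (hM 0 ⟨le_refl 0, hδpos.le⟩)
    set C := M * (|v 0| + 2) with hC
    have hC0 : 0 ≤ C := by positivity
    have hbound : ∀ᶠ x in F, ‖∫ y in (0:ℝ)..x, H y * (v (x - y) + 1)‖ ≤ C * x := by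
      filter_upwards [Ioo_mem_nhdsGT_of_mem (⟨le_refl 0, hδpos⟩ : (0:ℝ) ∈ Ico 0 δ)]
        with x hx
      have hineq : ∀ y ∈ Set.uIoc (0:ℝ) x, ‖H y * (v (x - y) + 1)‖ ≤ C := by
        intro y hy
        rw [uIoc_of_le hx.1.le] at hy
        have hHy : |H y| ≤ M := hM y ⟨hy.1.le, le_trans hy.2 hx.2.le⟩
        have hvy : |v (x - y) + 1| ≤ |v 0| + 2 := by
          rcases eq_or_lt_of_le hy.2 with h | h
          · rw [h, sub_self]
            calc |v 0 + 1| ≤ |v 0| + 1 := by simpa using abs_add_le (v 0) 1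
              _ ≤ |v 0| + 2 := by linarith
          · have hxy : 0 < x - y := by linarith
            have hd : dist (x - y) 0 < δ := by
              rw [Real.dist_eq, sub_zero, abs_of_pos hxy]
              linarith [hx.2, hy.1]
            have := hδ hd hxy
            calc |v (x - y) + 1| ≤ |v (x - y)| + 1 := by simpa using abs_add_le (v (x - y)) 1
              _ ≤ 1 + 1 := by linarith
              _ ≤ |v 0| + 2 := by linarith [abs_nonneg (v 0)]
        calc ‖H y * (v (x - y) + 1)‖ = |H y| * |v (x - y) + 1| := abs_mul _ _
          _ ≤ M * (|v 0| + 2) := by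
              apply mul_le_mul hHy hvy (abs_nonneg _) hM0
      have := intervalIntegral.norm_integral_le_of_norm_le_const hineq
      rw [sub_zero, abs_of_pos hx.1] at this
      linarith
    have habs : Tendsto (fun x => lam * C * |deriv v x * x|) F (nhds 0) := by
      have := (hwx0.abs).const_mul (lam * C)
      simpa using this
    apply squeeze_zero_norm' _ habs
    filter_upwards [hbound, hxpos] with x hb hx
    have hwx : |deriv v x| * x = |deriv v x * x| := by
      rw [abs_mul, abs_of_pos hx]
    calc ‖lam * deriv v x * ∫ y in (0:ℝ)..x, H y * (v (x - y) + 1)‖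
        = lam * |deriv v x| * ‖∫ y in (0:ℝ)..x, H y * (v (x - y) + 1)‖ := by
          rw [norm_mul, norm_mul]
          simp [abs_of_nonneg hlam, Real.norm_eq_abs]
      _ ≤ lam * |deriv v x| * (C * x) := by
          apply mul_le_mul_of_nonneg_left hb (by positivity)
      _ = lam * C * (|deriv v x| * x) := by ring
      _ = lam * C * |deriv v x * x| := by rw [hwx]
  -- G → γ
  have hG : Tendsto (fun x => (cρ + r * x) * (v x + 1) * deriv v x
      + (1/2) * σρ2 * (deriv v x)^2) F (nhds γ) := by
    have hRHS : Tendsto (fun x => γ * (v x + 1)^2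
        + lam * deriv v x * ∫ y in (0:ℝ)..x, H y * (v (x - y) + 1)) F (nhds γ) := by
      have h1 : Tendsto (fun x => γ * (v x + 1)^2) F (nhds γ) := by
        have := (hv1.pow 2).const_mul γ
        simpa using this
      simpa using h1.add hInt
    refine hRHS.congr' ?_
    filter_upwards [hxpos] with x hx
    have := heq x hx
    linarith
  -- β = 1
  have hβ1 : β = 1 := by
    rcases lt_trichotomy β 1 with hb | hb | hb
    · exfalso
      -- x ^ (β - 1) → atTop
      have hpow : Tendsto (fun x : ℝ => x ^ (β - 1)) F atTop := by
        have h1 : Tendsto (fun x : ℝ => x ^ (1 - β)) F (nhdsWithin 0 (Ioi 0)) := by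
          rw [tendsto_nhdsWithin_iff]
          constructor
          · have := ((Real.continuousAt_rpow_const 0 (1 - β)
              (Or.inr (by linarith))).tendsto).mono_left
              (nhdsWithin_le_nhds (s := Ioi (0:ℝ)))
            simpa [Real.zero_rpow (by intro h; linarith [h] : (1:ℝ) - β ≠ 0)] using this
          · filter_upwards [hxpos] with x hx
            exact Real.rpow_pos_of_pos hx _
        have h2 := h1.inv_tendsto_nhdsGT_zero
        refine h2.congr' ?_
        filter_upwards [hxpos] with x hx
        simp only [Pi.inv_apply]
        rw [← Real.rpow_neg hx.le]
        norm_num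
      -- -(deriv v) → atTop
      have hmt : Tendsto (fun x : ℝ => -(β * α) * x ^ (β - 1)) F atTop :=
        Tendsto.const_mul_atTop (by nlinarith) hpow
      have hmw : Tendsto (fun x => -(deriv v x)) F atTop := by
        have := Filter.Tendsto.pos_mul_atTop one_pos hasym' hmt
        refine this.congr' ?_
        filter_upwards [hxpos] with x hx
        have hp : (0:ℝ) < x ^ (β-1) := Real.rpow_pos_of_pos hx _
        have hd : β * α * x ^ (β-1) ≠ 0 :=
          mul_ne_zero (mul_ne_zero hβ.ne' hα) hp.ne'
        field_simp
      -- (deriv v)^2 → atTop, (deriv v)⁻¹ → 0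
      have hw2 : Tendsto (fun x => (deriv v x)^2) F atTop := by
        have := hmw.atTop_mul_atTop₀ hmw
        refine this.congr (fun x => by ring)
      have hwinv : Tendsto (fun x => (deriv v x)⁻¹) F (nhds 0) := by
        have := hmw.inv_tendsto_atTop
        have h2 := this.neg
        simp only [Pi.inv_apply, neg_neg, inv_neg, neg_zero] at h2
        exact h2
      -- divide G by w^2
      have hdiv : Tendsto (fun x => ((cρ + r * x) * (v x + 1) * deriv v x
          + (1/2) * σρ2 * (deriv v x)^2) / (deriv v x)^2) F (nhds 0) :=
        hG.div_atTop hw2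
      have hdiv2 : Tendsto (fun x => (cρ + r * x) * (v x + 1) * (deriv v x)⁻¹
          + (1/2) * σρ2) F (nhds ((1/2) * σρ2)) := by
        have h1 : Tendsto (fun x => (cρ + r * x) * (v x + 1) * (deriv v x)⁻¹)
            F (nhds 0) := by
          have := (hrx.mul hv1).mul hwinv
          simpa using this
        simpa using h1.add (tendsto_const_nhds (x := (1/2) * σρ2))
      have heq2 : Tendsto (fun x => (cρ + r * x) * (v x + 1) * (deriv v x)⁻¹
          + (1/2) * σρ2) F (nhds 0) := by
        refine hdiv.congr' ?_
        filter_upwards [hwneg] with x hx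
        have hne : deriv v x ≠ 0 := ne_of_lt hx
        field_simp
      have := tendsto_nhds_unique hdiv2 heq2
      nlinarith
    · exact hb
    · exfalso
      have hpow0 : Tendsto (fun x : ℝ => x ^ (β - 1)) F (nhds 0) := by
        have := ((Real.continuousAt_rpow_const 0 (β - 1)
          (Or.inr (by linarith))).tendsto).mono_left (nhdsWithin_le_nhds (s := Ioi (0:ℝ)))
        simpa [Real.zero_rpow (by intro h; linarith [h] : β - 1 ≠ 0)] using this
      have hw0 : Tendsto (deriv v) F (nhds 0) := by
        have := hasym'.mul (hpow0.const_mul (β * α))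
        have h2 : Tendsto (fun x => (deriv v x / (β * α * x ^ (β-1))) * (β * α * x ^ (β-1)))
            F (nhds 0) := by simpa using this
        refine h2.congr' ?_
        filter_upwards [hxpos] with x hx
        have hp : (0:ℝ) < x ^ (β-1) := Real.rpow_pos_of_pos hx _
        have hd : β * α * x ^ (β-1) ≠ 0 :=
          mul_ne_zero (mul_ne_zero hβ.ne' hα) hp.ne'
        field_simp
      have hG0 : Tendsto (fun x => (cρ + r * x) * (v x + 1) * deriv v x
          + (1/2) * σρ2 * (deriv v x)^2) F (nhds 0) := by
        have := ((hrx.mul hv1).mul hw0).add ((hw0.pow 2).const_mul ((1/2) * σρ2))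
        simpa using this
      have := tendsto_nhds_unique hG0 hG
      linarith
  subst hβ1
  -- deriv v → α
  have hasym'' : Tendsto (fun x => deriv v x / α) F (nhds 1) := by
    have : (fun x : ℝ => deriv v x / (1 * α * x ^ ((1:ℝ) - 1)))
        = fun x => deriv v x / α := by
      funext x
      norm_num
    rwa [this] at hasym'
  have hwα : Tendsto (deriv v) F (nhds α) := by
    have := hasym''.mul_const α
    rw [one_mul] at this
    refine this.congr (fun x => ?_)
    field_simp
  have hGlim2 : Tendsto (fun x => (cρ + r * x) * (v x + 1) * deriv v x
      + (1/2) * σρ2 * (deriv v x)^2) F (nhds (cρ * 1 * α + (1/2) * σρ2 * α^2)) :=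
    ((hrx.mul hv1).mul hwα).add ((hwα.pow 2).const_mul ((1/2) * σρ2))
  have hmain : cρ * α + (1/2) * σρ2 * α^2 = γ := by
    have := tendsto_nhds_unique hGlim2 hG
    linarith
  exact ⟨rfl, hmain, quad_solve cρ σρ2 γ α hcρ hσρ2 hγ hαneg hmain⟩
end

section
/- Let c_ρ ∈ ℝ, σ_ρ > 0, γ ≥ 0, and B = (c_ρ + √(c_ρ² + 2γσ_ρ²))/σ_ρ². If γ = (μ−r)²/(2σ²) with μ > r and a* = −c/(μ−r) + √(c²/(μ−r)² + (2σ₁c/(σ(μ−r)))(ρ₁−ρ)) with ρ₁ = (μ−r)σ₁/(2cσ) and c_ρ = c − ρ(μ−r)σ₁/σ, σ_ρ² = σ₁²(1−ρ²), then B = (μ−r)/(σ²(a* + ρσ₁/σ)). -/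
/-- identity B = (μ−r)/(σ²(a* + ρσ₁/σ)). -/
theorem stmt_9 (c r μ σ σ₁ ρ : ℝ) (hc : 0 < c) (hσ : 0 < σ) (hσ₁ : 0 < σ₁)
    (hμr : r < μ) (hρ : |ρ| < 1)
    (ρ₁ cρ σρ2 γ astar B : ℝ)
    (hρ₁ : ρ₁ = (μ - r) * σ₁ / (2 * c * σ))
    (hcρ : cρ = c - ρ * (μ - r) * σ₁ / σ)
    (hσρ2 : σρ2 = σ₁^2 * (1 - ρ^2))
    (hγ : γ = (μ - r)^2 / (2 * σ^2))
    (hastar : astar = -c / (μ - r)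
        + Real.sqrt (c^2 / (μ - r)^2 + (2 * σ₁ * c / (σ * (μ - r))) * (ρ₁ - ρ)))
    (hB : B = (cρ + Real.sqrt (cρ^2 + 2 * γ * σρ2)) / σρ2) :
    B = (μ - r) / (σ^2 * (astar + ρ * σ₁ / σ)) := by
  have hm : 0 < μ - r := sub_pos.mpr hμr
  have hρ2 : ρ ^ 2 < 1 := by
    have := abs_lt.mp hρ
    nlinarith [this.1, this.2]
  have hσρ2pos : 0 < σρ2 := by rw [hσρ2]; exact mul_pos (pow_pos hσ₁ 2) (by linarith)
  have hγpos : 0 < γ := by rw [hγ]; positivity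
  set D := cρ ^ 2 + 2 * γ * σρ2 with hD
  have hDpos : cρ ^ 2 < D := by nlinarith
  have hDnn : 0 ≤ D := by nlinarith [sq_nonneg cρ]
  set s := Real.sqrt D with hs
  have hs2 : s ^ 2 = D := Real.sq_sqrt hDnn
  have hsnn : 0 ≤ s := Real.sqrt_nonneg _
  have hscρ : cρ < s := by nlinarith [sq_nonneg (s - cρ), sq_nonneg (s + cρ)]
  have harg : c ^ 2 / (μ - r) ^ 2 + (2 * σ₁ * c / (σ * (μ - r))) * (ρ₁ - ρ)
      = D / (μ - r) ^ 2 := by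
    rw [hD, hρ₁, hcρ, hσρ2, hγ]
    field_simp
    ring
  have hsqrt : Real.sqrt (c ^ 2 / (μ - r) ^ 2 + (2 * σ₁ * c / (σ * (μ - r))) * (ρ₁ - ρ))
      = s / (μ - r) := by
    rw [harg, hs, Real.sqrt_div hDnn, Real.sqrt_sq hm.le]
  have key : astar + ρ * σ₁ / σ = (s - cρ) / (μ - r) := by
    rw [hastar, hsqrt, hcρ]
    field_simp
    ring
  rw [hB, key]
  have hmne : (μ - r) ≠ 0 := ne_of_gt hm
  have hσne : σ ≠ 0 := ne_of_gt hσ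
  have hσρne : σρ2 ≠ 0 := ne_of_gt hσρ2pos
  have hscne : s - cρ ≠ 0 := ne_of_gt (sub_pos.mpr hscρ)
  have hγeq : 2 * γ * σ ^ 2 = (μ - r) ^ 2 := by
    rw [hγ]; field_simp
  field_simp
  linear_combination σ ^ 2 * hs2 + σρ2 * hγeq
end
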